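/- Let A be a real symmetric 3×3 matrix and let θ ∈ ℝ³ be a unit vector with A·θ = 0. Then for all vectors w₁, w₂ ∈ ℝ³ and all t ∈ ℝ, the determinant of the 3×3 matrix whose columns are w₁ + t·A·w₁, w₂ + t·A·w₂ and θ equals (1 + t·tr A + t²·tr(cof A)) · ⟪w₁ × w₂, θ⟫, where w₁ × w₂ is the cross product. In particular this is the Jacobian identity JΨ(p,t) = (θ·ν)(1 + t·tr Dθ + t²·tr(cof Dθ)) for the ray parametrization Ψ(p,t) = p + t·θ(p). -/

import Mathlib

set_option maxRecDepth 8000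


open Matrix

/-- The cofactor matrix of a 3×3 real matrix: the transpose of the adjugate. -/
def cof (A : Matrix (Fin 3) (Fin 3) ℝ) : Matrix (Fin 3) (Fin 3) ℝ :=
  (Matrix.adjugate A)ᵀ

theorem stmt_4 (A : Matrix (Fin 3) (Fin 3) ℝ) (hA : A.IsSymm)
    (θ : Fin 3 → ℝ) (hθ : θ ⬝ᵥ θ = 1) (hAθ : A.mulVec θ = 0)
    (w₁ w₂ : Fin 3 → ℝ) (t : ℝ) :
    ((Matrix.of ![w₁ + t • A.mulVec w₁, w₂ + t • A.mulVec w₂, θ])ᵀ).det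
      = (1 + t * A.trace + t ^ 2 * (cof A).trace) * (crossProduct w₁ w₂ ⬝ᵥ θ) := by
  have hθ0 : θ ≠ 0 := by
    intro h
    rw [h] at hθ
    simp [dotProduct] at hθ
  have hdet : A.det = 0 := by
    rw [← Matrix.exists_mulVec_eq_zero_iff]
    exact ⟨θ, hθ0, hAθ⟩
  set B : Matrix (Fin 3) (Fin 3) ℝ := 1 + t • A with hB
  have hBθ : B.mulVec θ = θ := by
    simp [hB, Matrix.add_mulVec, Matrix.smul_mulVec, hAθ]
  have hfact : (Matrix.of ![w₁ + t • A.mulVec w₁, w₂ + t • A.mulVec w₂, θ])ᵀ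
      = B * (Matrix.of ![w₁, w₂, θ])ᵀ := by
    have h1 : w₁ + t • A.mulVec w₁ = B.mulVec w₁ := by
      simp [hB, Matrix.add_mulVec, Matrix.smul_mulVec]
    have h2 : w₂ + t • A.mulVec w₂ = B.mulVec w₂ := by
      simp [hB, Matrix.add_mulVec, Matrix.smul_mulVec]
    have key : ∀ u v x : Fin 3 → ℝ,
        (Matrix.of ![B.mulVec u, B.mulVec v, B.mulVec x])ᵀ = B * (Matrix.of ![u, v, x])ᵀ := by
      intro u v x
      ext i j
      fin_cases i <;> fin_cases j <;>
        simp [Matrix.mul_apply, Matrix.mulVec, dotProduct, Fin.sum_univ_three,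
          Matrix.vecHead, Matrix.vecTail]
    rw [h1, h2]
    conv_lhs => rw [← hBθ]
    rw [key]
  have hdetB : B.det = 1 + t * A.trace + t ^ 2 * (cof A).trace := by
    rw [Matrix.det_fin_three] at hdet ⊢
    simp only [hB, Matrix.add_apply, Matrix.smul_apply, Matrix.one_apply, cof,
      Matrix.trace_fin_three, Matrix.transpose_apply, Matrix.adjugate_fin_three,
      Matrix.of_apply, Matrix.cons_val', Matrix.cons_val_zero, Matrix.cons_val_one,
      Matrix.head_cons, Matrix.head_fin_const, Matrix.empty_val', Matrix.cons_val_fin_one,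
      smul_eq_mul]
    norm_num [Fin.ext_iff, Matrix.cons_val_two]
    linear_combination t ^ 3 * hdet
  have hdetM : ((Matrix.of ![w₁, w₂, θ])ᵀ).det = crossProduct w₁ w₂ ⬝ᵥ θ := by
    rw [Matrix.det_fin_three]
    simp [crossProduct, dotProduct, Fin.sum_univ_three]
    ring
  rw [hfact, Matrix.det_mul, hdetB, hdetM]
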